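/- With (B,β) a right H-Hom-comodule algebra, A = B^{coH}, and γ: H → B a convolution invertible H-comodule map with γ(1) = 1: for every b ∈ B, the element b₍₀₎γ⁻¹(b₍₁₎) lies in A = B^{coH}; more precisely ρ(b₍₀₎γ⁻¹(b₍₁₎)) = β(b₍₀₎γ⁻¹(b₍₁₎)) ⊗ 1. -/

import Mathlib

open scoped TensorProduct BigOperators

universe u v

/-- A Hom-Hopf algebra over a field `k`, with a chosen Sweedler-type
decomposition (`Idx`, `T`, `d1`, `d2`) of the comultiplication:
`comul h = ∑ i in T h, d1 h i ⊗ₜ d2 h i`.  The structure map `α` is assumed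
bijective (a linear equivalence), as throughout the paper. -/
structure HomHopf (k : Type u) (H : Type v) [Field k] [AddCommGroup H] [Module k H] where
  mul : H →ₗ[k] H →ₗ[k] H
  one : H
  α : H ≃ₗ[k] H
  comul : H →ₗ[k] H ⊗[k] H
  counit : H →ₗ[k] k
  S : H →ₗ[k] H
  Idx : Type v
  T : H → Finset Idx
  d1 : H → Idx → H
  d2 : H → Idx → H
  repr : ∀ h, comul h = ∑ i ∈ T h, d1 h i ⊗ₜ[k] d2 h i
  α_one : α one = one
  α_mul : ∀ x y, α (mul x y) = mul (α x) (α y)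
  one_mul : ∀ x, mul one x = α x
  mul_one : ∀ x, mul x one = α x
  hom_assoc : ∀ x y z, mul (α x) (mul y z) = mul (mul x y) (α z)
  counit_α : ∀ h, counit (α h) = counit h
  comul_α : ∀ h, comul (α h) = ∑ i ∈ T h, α (d1 h i) ⊗ₜ[k] α (d2 h i)
  counit_left : ∀ h, ∑ i ∈ T h, counit (d1 h i) • d2 h i = α h
  counit_right : ∀ h, ∑ i ∈ T h, counit (d2 h i) • d1 h i = α h
  hom_coassoc : ∀ h,
    (TensorProduct.assoc k H H H) (∑ i ∈ T h, comul (d1 h i) ⊗ₜ[k] α (d2 h i))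
      = ∑ i ∈ T h, α (d1 h i) ⊗ₜ[k] comul (d2 h i)
  counit_one : counit one = 1
  counit_mul : ∀ x y, counit (mul x y) = counit x * counit y
  comul_one : comul one = one ⊗ₜ[k] one
  comul_mul : ∀ x y, comul (mul x y)
      = ∑ i ∈ T x, ∑ j ∈ T y, mul (d1 x i) (d1 y j) ⊗ₜ[k] mul (d2 x i) (d2 y j)
  S_α : ∀ h, S (α h) = α (S h)
  S_left : ∀ h, ∑ i ∈ T h, mul (S (d1 h i)) (d2 h i) = counit h • one
  S_right : ∀ h, ∑ i ∈ T h, mul (d1 h i) (S (d2 h i)) = counit h • one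

/-- A unital Hom-associative algebra with bijective structure map. -/
structure HomAlg (k : Type u) (A : Type v) [Field k] [AddCommGroup A] [Module k A] where
  mul : A →ₗ[k] A →ₗ[k] A
  one : A
  β : A ≃ₗ[k] A
  β_one : β one = one
  β_mul : ∀ x y, β (mul x y) = mul (β x) (β y)
  one_mul : ∀ x, mul one x = β x
  mul_one : ∀ x, mul x one = β x
  hom_assoc : ∀ x y z, mul (β x) (mul y z) = mul (mul x y) (β z)

section Comod

variable (k : Type u) (H B : Type v) [Field k]
  [AddCommGroup H] [Module k H] [AddCommGroup B] [Module k B]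

/-- A right Hom-`H`-comodule algebra `(B,β)` with a chosen Sweedler decomposition
`ρ b = ∑ i in Tc b, r0 b i ⊗ₜ r1 b i` of the coaction. -/
structure RComodAlg (HH : HomHopf k H) where
  mul : B →ₗ[k] B →ₗ[k] B
  one : B
  β : B ≃ₗ[k] B
  β_one : β one = one
  β_mul : ∀ x y, β (mul x y) = mul (β x) (β y)
  one_mul : ∀ x, mul one x = β x
  mul_one : ∀ x, mul x one = β x
  hom_assoc : ∀ x y z, mul (β x) (mul y z) = mul (mul x y) (β z)
  ρ : B →ₗ[k] B ⊗[k] H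
  Jdx : Type v
  Tc : B → Finset Jdx
  r0 : B → Jdx → B
  r1 : B → Jdx → H
  reprρ : ∀ b, ρ b = ∑ i ∈ Tc b, r0 b i ⊗ₜ[k] r1 b i
  counit_ρ : ∀ b, ∑ i ∈ Tc b, HH.counit (r1 b i) • r0 b i = β b
  ρ_β : ∀ b, ρ (β b) = ∑ i ∈ Tc b, β (r0 b i) ⊗ₜ[k] HH.α (r1 b i)
  ρ_coassoc : ∀ b, (TensorProduct.assoc k B H H)
      (∑ i ∈ Tc b, ρ (r0 b i) ⊗ₜ[k] HH.α (r1 b i))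
    = ∑ i ∈ Tc b, β (r0 b i) ⊗ₜ[k] HH.comul (r1 b i)
  ρ_mul : ∀ b b', ρ (mul b b')
    = ∑ i ∈ Tc b, ∑ j ∈ Tc b', mul (r0 b i) (r0 b' j) ⊗ₜ[k] HH.mul (r1 b i) (r1 b' j)
  ρ_one : ρ one = one ⊗ₜ[k] HH.one

variable {k H B}

/-- `γ` is a convolution invertible (with inverse `γ'`) right `H`-comodule map
`H → B` with `γ(1) = 1`, i.e. the data of a cleft extension `B^{coH} ⊆ B`. -/
def CleftData {HH : HomHopf k H} (BB : RComodAlg k H B HH) (γ γ' : H →ₗ[k] B) : Prop :=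
  (∀ h, BB.ρ (γ h) = ∑ i ∈ HH.T h, γ (HH.d1 h i) ⊗ₜ[k] HH.d2 h i) ∧
  (∀ h, γ (HH.α h) = BB.β (γ h)) ∧
  (∀ h, ∑ i ∈ HH.T h, BB.mul (γ (HH.d1 h i)) (γ' (HH.d2 h i)) = HH.counit h • BB.one) ∧
  (∀ h, ∑ i ∈ HH.T h, BB.mul (γ' (HH.d1 h i)) (γ (HH.d2 h i)) = HH.counit h • BB.one) ∧
  (γ HH.one = BB.one)

end Comod



section Aux
open TensorProduct

variable {k : Type u} {H B : Type v} [Field k]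
  [AddCommGroup H] [Module k H] [AddCommGroup B] [Module k B]

theorem HomHopf.counit_S (HH : HomHopf k H) (h : H) :
    HH.counit (HH.S h) = HH.counit h := by
  have h1 : HH.counit (HH.S (HH.α h)) = HH.counit h := by
    have h2 := congrArg HH.counit (HH.S_left h)
    rw [map_sum, map_smul] at h2
    simp only [HH.counit_mul, HH.counit_one, smul_eq_mul] at h2
    rw [_root_.mul_one] at h2
    rw [← HH.counit_right h, map_sum, map_sum]
    simp only [map_smul, smul_eq_mul]
    rw [← h2]
    exact Finset.sum_congr rfl fun i _ => mul_comm _ _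
  rwa [HH.S_α, HH.counit_α] at h1

theorem gamma'_alpha {HH : HomHopf k H} (BB : RComodAlg k H B HH) (γ' : H →ₗ[k] B)
    (hγ'ρ : ∀ h, BB.ρ (γ' h) = ∑ i ∈ HH.T h, γ' (HH.d2 h i) ⊗ₜ[k] HH.S (HH.d1 h i))
    (h : H) : γ' (HH.α h) = BB.β (γ' h) := by
  set E2 : B ⊗[k] H →ₗ[k] B :=
    TensorProduct.lift (((LinearMap.lsmul k B).comp HH.counit).flip) with hE2def
  have hE2 : ∀ (u : B) (g : H), E2 (u ⊗ₜ[k] g) = HH.counit g • u := fun u g => rfl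
  have w1 : E2 (BB.ρ (γ' h)) = BB.β (γ' h) := by
    rw [BB.reprρ, map_sum]
    simp only [hE2]
    exact BB.counit_ρ _
  have w2 : E2 (BB.ρ (γ' h)) = γ' (HH.α h) := by
    rw [hγ'ρ, map_sum]
    simp only [hE2, HH.counit_S]
    rw [← HH.counit_left h, map_sum]
    simp only [map_smul]
  rw [← w2, w1]

end Aux

open TensorProduct in
/-- With `(B,β)` a right `H`-Hom-comodule algebra and `γ` a convolution
invertible comodule map with `γ(1)=1`, for every `b ∈ B` the element `b₍₀₎γ⁻¹(b₍₁₎)`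
lies in the coinvariants `A = B^{coH}`:
`ρ(b₍₀₎γ⁻¹(b₍₁₎)) = β(b₍₀₎γ⁻¹(b₍₁₎)) ⊗ 1`. -/
theorem cleft_coinvariant_element {k : Type u} {H B : Type v} [Field k]
    [AddCommGroup H] [Module k H] [AddCommGroup B] [Module k B]
    (HH : HomHopf k H) (BB : RComodAlg k H B HH) (γ γ' : H →ₗ[k] B)
    (hγ : CleftData BB γ γ')
    (hγ'ρ : ∀ h, BB.ρ (γ' h) = ∑ i ∈ HH.T h, γ' (HH.d2 h i) ⊗ₜ[k] HH.S (HH.d1 h i)) :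
    ∀ b : B, BB.ρ (∑ i ∈ BB.Tc b, BB.mul (BB.r0 b i) (γ' (BB.r1 b i)))
      = BB.β (∑ i ∈ BB.Tc b, BB.mul (BB.r0 b i) (γ' (BB.r1 b i))) ⊗ₜ[k] HH.one := by
  classical
  intro b
  -- the element in question is M (ρ b) for the linear map M : u ⊗ h ↦ u · γ'(h)
  set M : B ⊗[k] H →ₗ[k] B := TensorProduct.lift (BB.mul.compl₂ γ') with hMdef
  have hM : ∀ (u : B) (g : H), M (u ⊗ₜ[k] g) = BB.mul u (γ' g) := fun u g => rfl
  have hx : ∀ b' : B,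
      (∑ i ∈ BB.Tc b', BB.mul (BB.r0 b' i) (γ' (BB.r1 b' i))) = M (BB.ρ b') := by
    intro b'
    rw [BB.reprρ, map_sum]
    simp only [hM]
  obtain ⟨c, rfl⟩ := BB.β.surjective b
  rw [hx, BB.ρ_β, map_sum]
  simp only [hM]
  -- auxiliary linear maps
  set f2 : H ⊗[k] H →ₗ[k] H := TensorProduct.lift (HH.mul.compl₂ HH.S) with hf2def
  set Ω : (B ⊗[k] H) ⊗[k] (H ⊗[k] H) →ₗ[k] B ⊗[k] H :=
    (TensorProduct.map M f2) ∘ₗ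
      (TensorProduct.tensorTensorTensorComm k B H H H).toLinearMap ∘ₗ
      (TensorProduct.map LinearMap.id (TensorProduct.comm k H H).toLinearMap) with hΩdef
  have hΩ : ∀ (u : B) (v h g : H),
      Ω ((u ⊗ₜ[k] v) ⊗ₜ[k] (h ⊗ₜ[k] g))
        = BB.mul u (γ' g) ⊗ₜ[k] HH.mul v (HH.S h) := by
    intro u v h g
    simp only [hΩdef, LinearMap.comp_apply, TensorProduct.map_tmul, LinearMap.id_apply,
      LinearEquiv.coe_coe, TensorProduct.comm_tmul, tensorTensorTensorComm_tmul]
    rfl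
  -- Lemma L1 : coaction of a product u · γ'(h)
  have L1 : ∀ (u : B) (h : H),
      BB.ρ (BB.mul u (γ' h)) = Ω (BB.ρ u ⊗ₜ[k] HH.comul h) := by
    intro u h
    rw [BB.ρ_mul, BB.reprρ u, HH.repr h, TensorProduct.sum_tmul, map_sum]
    refine Finset.sum_congr rfl fun i _ => ?_
    rw [TensorProduct.tmul_sum, map_sum]
    have e1 : (∑ j ∈ BB.Tc (γ' h),
          BB.mul (BB.r0 u i) (BB.r0 (γ' h) j) ⊗ₜ[k] HH.mul (BB.r1 u i) (BB.r1 (γ' h) j))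
        = (TensorProduct.map (BB.mul (BB.r0 u i)) (HH.mul (BB.r1 u i))) (BB.ρ (γ' h)) := by
      rw [BB.reprρ (γ' h), map_sum]
      simp only [TensorProduct.map_tmul]
    rw [e1, hγ'ρ, map_sum]
    simp only [TensorProduct.map_tmul, hΩ]
  -- twisted version of Ω and the composite Ψ
  set Ω₂ : (B ⊗[k] H) ⊗[k] (H ⊗[k] H) →ₗ[k] B ⊗[k] H :=
    Ω ∘ₗ (TensorProduct.map
      (TensorProduct.map BB.β.toLinearMap HH.α.toLinearMap) LinearMap.id) with hΩ₂def
  set Ψ : B ⊗[k] (H ⊗[k] H) →ₗ[k] B ⊗[k] H :=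
    Ω₂ ∘ₗ (TensorProduct.map LinearMap.id HH.comul) ∘ₗ
      (TensorProduct.assoc k B H H).symm.toLinearMap with hΨdef
  have hρβ : ∀ u : B, BB.ρ (BB.β u)
      = TensorProduct.map BB.β.toLinearMap HH.α.toLinearMap (BB.ρ u) := by
    intro u
    rw [BB.ρ_β, BB.reprρ u, map_sum]
    simp only [TensorProduct.map_tmul, LinearEquiv.coe_coe]
  have hΔα : ∀ h : H, HH.comul (HH.α h)
      = TensorProduct.map HH.α.toLinearMap HH.α.toLinearMap (HH.comul h) := by
    intro h
    rw [HH.comul_α, HH.repr h, map_sum]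
    simp only [TensorProduct.map_tmul, LinearEquiv.coe_coe]
  -- step 2 : express each summand through Ψ and the coassociativity of ρ
  have step2 : ∀ (z : B ⊗[k] H) (w : H),
      Ω₂ (z ⊗ₜ[k] HH.comul w) = Ψ ((TensorProduct.assoc k B H H) (z ⊗ₜ[k] w)) := by
    intro z w
    simp only [hΨdef, LinearMap.comp_apply, LinearEquiv.coe_coe,
      LinearEquiv.symm_apply_apply, TensorProduct.map_tmul, LinearMap.id_apply]
  have hΨpure : ∀ (u : B) (a g : H),
      Ψ (u ⊗ₜ[k] (a ⊗ₜ[k] g)) = ∑ p ∈ HH.T g,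
        BB.mul (BB.β u) (γ' (HH.d2 g p)) ⊗ₜ[k] HH.mul (HH.α a) (HH.S (HH.d1 g p)) := by
    intro u a g
    simp only [hΨdef, hΩ₂def, LinearMap.comp_apply, LinearEquiv.coe_coe,
      TensorProduct.assoc_symm_tmul, TensorProduct.map_tmul, LinearMap.id_apply]
    rw [HH.repr g, TensorProduct.tmul_sum, map_sum]
    simp only [TensorProduct.map_tmul, LinearEquiv.coe_coe, LinearMap.id_apply, hΩ]
  -- rewrite the left-hand side
  have lhs1 : BB.ρ (∑ i ∈ BB.Tc c, BB.mul (BB.β (BB.r0 c i)) (γ' (HH.α (BB.r1 c i))))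
      = ∑ i ∈ BB.Tc c, Ψ ((TensorProduct.assoc k B H H)
          (BB.ρ (BB.r0 c i) ⊗ₜ[k] HH.α (BB.r1 c i))) := by
    rw [map_sum]
    refine Finset.sum_congr rfl fun i _ => ?_
    rw [L1, ← step2, hρβ]
    simp only [hΩ₂def, LinearMap.comp_apply, TensorProduct.map_tmul, LinearMap.id_apply]
  rw [lhs1, ← map_sum, ← map_sum, BB.ρ_coassoc c, map_sum]
  -- now compute each Ψ (β (r0 c i) ⊗ Δ (r1 c i)) using Hom-coassociativity in H
  have claim : ∀ (u : B) (h : H),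
      Ψ (BB.β u ⊗ₜ[k] HH.comul h)
        = BB.mul (BB.β (BB.β u)) (γ' (HH.α (HH.α h))) ⊗ₜ[k] HH.one := by
    intro u h
    set g2 : H →ₗ[k] B := (BB.mul (BB.β (BB.β u))) ∘ₗ γ' with hg2def
    set Ξ : H ⊗[k] (H ⊗[k] H) →ₗ[k] B ⊗[k] H :=
      (TensorProduct.comm k H B).toLinearMap ∘ₗ (TensorProduct.map f2 g2) ∘ₗ
        (TensorProduct.assoc k H H H).symm.toLinearMap with hΞdef
    have hΞ : ∀ (a h' g : H), Ξ (a ⊗ₜ[k] (h' ⊗ₜ[k] g))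
        = BB.mul (BB.β (BB.β u)) (γ' g) ⊗ₜ[k] HH.mul a (HH.S h') := by
      intro a h' g
      simp only [hΞdef, LinearMap.comp_apply, LinearEquiv.coe_coe,
        TensorProduct.assoc_symm_tmul, TensorProduct.map_tmul, TensorProduct.comm_tmul,
        hg2def, LinearMap.comp_apply, LinearEquiv.coe_coe]
      rfl
    have e3 : Ψ (BB.β u ⊗ₜ[k] HH.comul h)
        = ∑ q ∈ HH.T h, Ξ (HH.α (HH.d1 h q) ⊗ₜ[k] HH.comul (HH.d2 h q)) := by
      rw [HH.repr h, TensorProduct.tmul_sum, map_sum]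
      refine Finset.sum_congr rfl fun q _ => ?_
      rw [hΨpure, HH.repr (HH.d2 h q), TensorProduct.tmul_sum, map_sum]
      refine Finset.sum_congr rfl fun p _ => ?_
      rw [hΞ]
    rw [e3, ← map_sum, ← HH.hom_coassoc h]
    simp only [map_sum]
    have e4 : ∀ q, Ξ ((TensorProduct.assoc k H H H)
          (HH.comul (HH.d1 h q) ⊗ₜ[k] HH.α (HH.d2 h q)))
        = HH.counit (HH.d1 h q) •
            (BB.mul (BB.β (BB.β u)) (γ' (HH.α (HH.d2 h q))) ⊗ₜ[k] HH.one) := by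
      intro q
      rw [HH.repr (HH.d1 h q), TensorProduct.sum_tmul, map_sum, map_sum]
      simp only [TensorProduct.assoc_tmul, hΞ]
      rw [← TensorProduct.tmul_sum, HH.S_right (HH.d1 h q), TensorProduct.tmul_smul]
    simp only [e4]
    have e5 : (∑ q ∈ HH.T h, HH.counit (HH.d1 h q) •
          (BB.mul (BB.β (BB.β u)) (γ' (HH.α (HH.d2 h q))) ⊗ₜ[k] HH.one))
        = (BB.mul (BB.β (BB.β u)) (γ' (HH.α (HH.α h)))) ⊗ₜ[k] HH.one := by
      have : ∀ q ∈ HH.T h, HH.counit (HH.d1 h q) •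
            (BB.mul (BB.β (BB.β u)) (γ' (HH.α (HH.d2 h q))) ⊗ₜ[k] HH.one)
          = (g2 (HH.α (HH.counit (HH.d1 h q) • HH.d2 h q))) ⊗ₜ[k] HH.one := by
        intro q _
        simp only [hg2def, LinearMap.comp_apply, LinearEquiv.coe_coe, map_smul,
          TensorProduct.smul_tmul']
      rw [Finset.sum_congr rfl this, ← TensorProduct.sum_tmul, ← map_sum, ← map_sum,
        HH.counit_left h]
      simp only [hg2def, LinearMap.comp_apply, LinearEquiv.coe_coe]
    rw [e5]
  have rhs1 : BB.β (∑ i ∈ BB.Tc c, BB.mul (BB.β (BB.r0 c i)) (γ' (HH.α (BB.r1 c i))))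
        ⊗ₜ[k] HH.one
      = ∑ i ∈ BB.Tc c, BB.mul (BB.β (BB.β (BB.r0 c i)))
          (γ' (HH.α (HH.α (BB.r1 c i)))) ⊗ₜ[k] HH.one := by
    rw [map_sum, TensorProduct.sum_tmul]
    refine Finset.sum_congr rfl fun i _ => ?_
    rw [BB.β_mul, ← gamma'_alpha BB γ' hγ'ρ (HH.α (BB.r1 c i))]
  rw [rhs1]
  refine Finset.sum_congr rfl fun i _ => ?_
  exact claim (BB.r0 c i) (BB.r1 c i)
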